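/- arXiv:2409.15301 — 5 statements merged into one kernel-verified Lean document; each statement's English description precedes it below -/
import Mathlib

section
/- Let f be a probability density function differentiable at a point m with f(m) > 0, f'(m) = 0, and F(m) = 1/2. Then m is a critical point of the derangetropy: (ρ_f)'(m) = 0. -/
open MeasureTheory

/-- Cumulative distribution function of a density `f`: `F(x) = ∫_{-∞}^x f(t) dt`. -/
noncomputable def cdfFn (f : ℝ → ℝ) (x : ℝ) : ℝ := ∫ t in Set.Iic x, f t

/-- The derangetropy functional
`ρ_f(x) = (24/(πe)) · sin (π F(x)) · F(x)^{F(x)} · (1-F(x))^{1-F(x)} · f(x)`,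
where powers are real powers (so `0^0 = 1`). -/
noncomputable def derangetropy (f : ℝ → ℝ) (x : ℝ) : ℝ :=
  24 / (Real.pi * Real.exp 1) * Real.sin (Real.pi * cdfFn f x) *
    cdfFn f x ^ cdfFn f x * (1 - cdfFn f x) ^ (1 - cdfFn f x) * f x

/-- Critical point at the median: if `f` is differentiable at `m` with `f(m) > 0`,
`f'(m) = 0` and `F(m) = 1/2`, then `(ρ_f)'(m) = 0`. -/
theorem derangetropy_hasDerivAt_median (f : ℝ → ℝ) (hmeas : Measurable f)
    (hnonneg : ∀ x, 0 ≤ f x) (hint : ∫ x, f x = 1)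
    (m : ℝ) (hf : HasDerivAt f 0 m) (hfm : 0 < f m) (hFm : cdfFn f m = 1 / 2) :
    HasDerivAt (derangetropy f) 0 m := by
  have hfi : Integrable f := by
    by_contra h
    rw [integral_undef h] at hint
    norm_num at hint
  -- FTC: F' = f at m
  have key : ∀ x, cdfFn f x = cdfFn f m + ∫ t in m..x, f t := by
    intro x
    have := intervalIntegral.integral_Iic_sub_Iic (hfi.integrableOn (s := Set.Iic m))
      (hfi.integrableOn (s := Set.Iic x))
    unfold cdfFn
    linarith [this]
  have hderiv_int : HasDerivAt (fun x => ∫ t in m..x, f t) (f m) m :=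
    intervalIntegral.integral_hasDerivAt_right hfi.intervalIntegrable
      (hmeas.stronglyMeasurable.stronglyMeasurableAtFilter) hf.continuousAt
  have hF : HasDerivAt (cdfFn f) (f m) m := by
    have h := (hasDerivAt_const m (cdfFn f m)).add hderiv_int
    rw [zero_add] at h
    have : cdfFn f = fun x => cdfFn f m + ∫ t in m..x, f t := funext key
    rw [this]
    exact h
  have hFpos : (0:ℝ) < cdfFn f m := by rw [hFm]; norm_num
  have h1Fpos : (0:ℝ) < 1 - cdfFn f m := by rw [hFm]; norm_num
  have hA : HasDerivAt (fun x => Real.sin (Real.pi * cdfFn f x))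
      (Real.cos (Real.pi * cdfFn f m) * (Real.pi * f m)) m :=
    (hF.const_mul Real.pi).sin
  have hB := hF.rpow hF hFpos
  have h1F : HasDerivAt (fun x => 1 - cdfFn f x) (-(f m)) m := by
    simpa using hF.const_sub 1
  have hC := h1F.rpow h1F h1Fpos
  have hbig := (((hA.const_mul (24 / (Real.pi * Real.exp 1))).mul hB).mul hC).mul hf
  have heq : derangetropy f = fun x =>
      24 / (Real.pi * Real.exp 1) * Real.sin (Real.pi * cdfFn f x) *
        cdfFn f x ^ cdfFn f x * (1 - cdfFn f x) ^ (1 - cdfFn f x) * f x := rfl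
  rw [heq]
  refine hbig.congr_deriv (Eq.symm ?_)
  simp only [Pi.mul_apply]
  rw [hFm]
  have hcos : Real.cos (Real.pi * (1/2)) = 0 := by
    rw [mul_one_div]; exact Real.cos_pi_div_two
  rw [hcos]
  norm_num
  left
  ring
end

section
/- Let f be a probability density function that is symmetric about a point m (i.e., f(m+t) = f(m−t) for all t) and unimodal with mode m (i.e., f is nondecreasing on (−∞, m] and nonincreasing on [m, ∞)). Then the derangetropy ρ_f attains its global maximum at the median m: ρ_f(x) ≤ ρ_f(m) for all x ∈ ℝ. -/
open MeasureTheory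

/-- Key polynomial inequality. -/
lemma aux_poly {s : ℝ} (hs0 : 0 < s) (hs1 : s ≤ 1/4) :
    2 ≤ Real.pi^2/4 * (1 - Real.pi^2*s/16)^2 * (1+4*s) := by
  have ha1 : (9.8:ℝ) < Real.pi^2 := by nlinarith [Real.pi_gt_d6]
  have ha2 : Real.pi^2 < 10 := by nlinarith [Real.pi_lt_d2, Real.pi_pos]
  set a := Real.pi^2 with hadef
  have has : 0 ≤ a*s := mul_nonneg (by positivity) hs0.le
  have has2 : a*s ≤ 5/2 := by nlinarith
  have hbr : 0 ≤ 1 - a/32 - a*s/8 := by nlinarith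
  have hkey : 0 ≤ a*s*(1 - a/32 - a*s/8) := mul_nonneg has hbr
  have goal2 : 2 ≤ a/4*(1+4*s)*(1-a*s/8) := by nlinarith
  have hsq : 1 - a*s/8 ≤ (1 - a*s/16)^2 := by nlinarith [sq_nonneg (a*s/16)]
  have hpos : (0:ℝ) ≤ a/4*(1+4*s) := by positivity
  calc (2:ℝ) ≤ a/4*(1+4*s)*(1-a*s/8) := goal2
    _ ≤ a/4*(1+4*s)*(1 - a*s/16)^2 := mul_le_mul_of_nonneg_left hsq hpos
    _ = a/4 * (1 - a*s/16)^2 * (1+4*s) := by ring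

/-- Cosine bound via `sin_gt_sub_cube`. -/
lemma aux_cos {r : ℝ} (hr0 : 0 < r) (hr1 : r ≤ 1/2) :
    Real.cos (Real.pi * r) ≤ 1 - 2 * (Real.pi*r/2 - (Real.pi*r/2)^3/4)^2 := by
  set y := Real.pi * r / 2 with hy
  have hpi := Real.pi_gt_three
  have hpi4 := Real.pi_lt_d2
  have hy0 : 0 < y := by positivity
  have hy1 : y ≤ 1 := by rw [hy]; nlinarith
  have hsin : y - y^3/4 < Real.sin y := by
    have := Real.sin_gt_sub_cube hy0; linarith [pow_pos hy0 3]
  have hL0 : 0 ≤ y - y^3/4 := by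
    nlinarith [mul_nonneg (mul_nonneg hy0.le (sub_nonneg.2 hy1)) (by linarith : (0:ℝ) ≤ 1 + y)]
  have hcos : Real.cos (Real.pi * r) = 1 - 2 * Real.sin y ^ 2 := by
    have : Real.pi * r = 2 * y := by rw [hy]; ring
    rw [this, Real.cos_two_mul, ← Real.sin_sq_add_cos_sq y]; ring
  have hsq : (y - y^3/4)^2 ≤ Real.sin y ^ 2 := by
    have := Real.sin_nonneg_of_nonneg_of_le_pi (le_of_lt hy0) (by nlinarith)
    nlinarith
  rw [hcos]; nlinarith

/-- `sin(πu)(u² + (1-u)²) ≤ 1/2` on `[0,1]`. -/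
lemma aux_sin_quad {u : ℝ} (hu0 : 0 ≤ u) (hu1 : u ≤ 1) :
    Real.sin (Real.pi * u) * (u*u + (1-u)*(1-u)) ≤ 1/2 := by
  set t := u - 1/2 with ht
  have hsin : Real.sin (Real.pi * u) = Real.cos (Real.pi * t) := by
    rw [show Real.pi * u = Real.pi * t + Real.pi/2 by rw [ht]; ring,
      Real.sin_add_pi_div_two]
  have hquad : u*u + (1-u)*(1-u) = 1/2 + 2*t^2 := by rw [ht]; ring
  rw [hsin, hquad]
  have habs : Real.cos (Real.pi * t) = Real.cos (Real.pi * |t|) := by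
    rcases abs_cases t with ⟨h, _⟩ | ⟨h, _⟩
    · rw [h]
    · rw [h, mul_neg, Real.cos_neg]
  set r := |t| with hr
  have ht2 : t^2 = r^2 := (sq_abs t).symm
  rw [habs, ht2]
  have hr1 : r ≤ 1/2 := by
    rw [hr, abs_le]
    constructor <;> (rw [ht]) <;> (first | linarith | nlinarith)
  rcases eq_or_lt_of_le (abs_nonneg t) with h0 | hr0
  · have h0' : r = 0 := by rw [hr, ← h0]
    rw [h0']; simp
  · have hcos := aux_cos hr0 hr1
    have haux := aux_poly (mul_pos hr0 hr0) (by nlinarith : r*r ≤ 1/4)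
    have hL : (Real.pi*r/2 - (Real.pi*r/2)^3/4)^2
        = r^2 * (Real.pi^2/4 * (1 - Real.pi^2*(r*r)/16)^2) := by ring
    have haux' : 2 * r^2 ≤ r^2 * (Real.pi^2/4 * (1 - Real.pi^2*(r*r)/16)^2 * (1+4*(r*r))) := by
      have := mul_le_mul_of_nonneg_left haux (sq_nonneg r)
      linarith [this]
    calc Real.cos (Real.pi * r) * (1/2 + 2*r^2)
        ≤ (1 - 2 * (Real.pi*r/2 - (Real.pi*r/2)^3/4)^2) * (1/2 + 2*r^2) := by
          apply mul_le_mul_of_nonneg_right hcos; positivity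
      _ ≤ 1/2 := by rw [hL]; nlinarith [haux']

/-- The entropy-type factor is at most `1/2` on `[0,1]`. -/
lemma aux_g_le {u : ℝ} (hu0 : 0 ≤ u) (hu1 : u ≤ 1) :
    Real.sin (Real.pi * u) * u ^ u * (1-u) ^ (1-u) ≤ 1/2 := by
  have h1u : (0:ℝ) ≤ 1 - u := by linarith
  have hAM : u ^ u * (1-u) ^ (1-u) ≤ u*u + (1-u)*(1-u) :=
    Real.geom_mean_le_arith_mean2_weighted hu0 h1u hu0 h1u (by ring)
  have hsin0 : 0 ≤ Real.sin (Real.pi * u) :=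
    Real.sin_nonneg_of_nonneg_of_le_pi (by positivity)
      (by nlinarith [Real.pi_pos])
  calc Real.sin (Real.pi * u) * u ^ u * (1-u) ^ (1-u)
      = Real.sin (Real.pi * u) * (u ^ u * (1-u) ^ (1-u)) := by ring
    _ ≤ Real.sin (Real.pi * u) * (u*u + (1-u)*(1-u)) :=
        mul_le_mul_of_nonneg_left hAM hsin0
    _ ≤ 1/2 := aux_sin_quad hu0 hu1

/-- For a symmetric unimodal density (symmetric about `m`, nondecreasing on
`(-∞, m]` and nonincreasing on `[m, ∞)`), the derangetropy attains its global
maximum at the median `m`. -/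
theorem derangetropy_max_at_median (f : ℝ → ℝ) (hmeas : Measurable f)
    (hnonneg : ∀ x, 0 ≤ f x) (hint : ∫ x, f x = 1)
    (m : ℝ) (hsym : ∀ t, f (m + t) = f (m - t))
    (hmono : MonotoneOn f (Set.Iic m)) (hanti : AntitoneOn f (Set.Ici m)) :
    ∀ x, derangetropy f x ≤ derangetropy f m := by
  have hf : Integrable f := by
    by_contra h
    rw [integral_undef h] at hint; norm_num at hint
  have hsym' : ∀ x, f (2*m - x) = f x := by
    intro x
    have h := hsym (x - m)
    rw [add_sub_cancel] at h
    rw [show 2*m - x = m - (x - m) by ring]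
    exact h.symm
  have hT : MeasurePreserving (fun x : ℝ => 2*m - x) volume volume := by
    have h1 : MeasurePreserving (fun x : ℝ => -x) volume volume :=
      Measure.measurePreserving_neg _
    have h2 : MeasurePreserving (fun x : ℝ => 2*m + x) volume volume :=
      measurePreserving_add_left volume (2*m)
    have := h2.comp h1
    simpa [Function.comp_def, sub_eq_add_neg] using this
  have hemb : MeasurableEmbedding (fun x : ℝ => 2*m - x) := by
    have heq : (fun x : ℝ => 2*m - x) = (fun x : ℝ => 2*m + x) ∘ (fun x : ℝ => -x) := by
      funext x; simp [sub_eq_add_neg]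
    rw [heq]
    exact ((Homeomorph.addLeft (2*m)).isClosedEmbedding.measurableEmbedding).comp
      ((Homeomorph.neg ℝ).isClosedEmbedding.measurableEmbedding)
  have hIoi : ∫ x in Set.Ioi m, f x = ∫ x in Set.Iic m, f x := by
    have key := hT.setIntegral_preimage_emb hemb f (Set.Ioi m)
    have hpre : (fun x : ℝ => 2*m - x) ⁻¹' Set.Ioi m = Set.Iio m := by
      ext x
      simp only [Set.mem_preimage, Set.mem_Ioi, Set.mem_Iio]
      constructor <;> intro <;> linarith
    rw [hpre] at key
    calc ∫ x in Set.Ioi m, f x = ∫ x in Set.Iio m, f (2*m - x) := key.symm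
      _ = ∫ x in Set.Iio m, f x := by simp_rw [hsym']
      _ = ∫ x in Set.Iic m, f x := integral_Iic_eq_integral_Iio.symm
  have hFm : cdfFn f m = 1/2 := by
    have hadd : (∫ x in Set.Iic m, f x) + (∫ x in Set.Ioi m, f x) = 1 := by
      rw [intervalIntegral.integral_Iic_add_Ioi hf.integrableOn hf.integrableOn, hint]
    unfold cdfFn
    linarith [hIoi]
  have hF0 : ∀ x, 0 ≤ cdfFn f x := fun x =>
    setIntegral_nonneg measurableSet_Iic (fun t _ => hnonneg t)
  have hF1 : ∀ x, cdfFn f x ≤ 1 := by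
    intro x
    rw [← hint]
    exact setIntegral_le_integral hf (Filter.Eventually.of_forall hnonneg)
  have fmax : ∀ x, f x ≤ f m := by
    intro x
    rcases le_total x m with h | h
    · exact hmono (Set.mem_Iic.2 h) (Set.mem_Iic.2 le_rfl) h
    · exact hanti (Set.mem_Ici.2 le_rfl) (Set.mem_Ici.2 h) h
  intro x
  have hC : (0:ℝ) ≤ 24 / (Real.pi * Real.exp 1) := by positivity
  have hg := aux_g_le (hF0 x) (hF1 x)
  have hg0 : 0 ≤ Real.sin (Real.pi * cdfFn f x) * cdfFn f x ^ cdfFn f x *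
      (1 - cdfFn f x) ^ (1 - cdfFn f x) := by
    have hs : 0 ≤ Real.sin (Real.pi * cdfFn f x) :=
      Real.sin_nonneg_of_nonneg_of_le_pi (mul_nonneg Real.pi_pos.le (hF0 x))
        (mul_le_of_le_one_right Real.pi_pos.le (hF1 x))
    exact mul_nonneg (mul_nonneg hs (Real.rpow_nonneg (hF0 x) _))
      (Real.rpow_nonneg (by linarith [hF1 x]) _)
  have hm_val : derangetropy f m = 24 / (Real.pi * Real.exp 1) * (1/2 * f m) := by
    unfold derangetropy
    rw [hFm]
    rw [show Real.pi * (1/2 : ℝ) = Real.pi / 2 by ring, Real.sin_pi_div_two]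
    rw [show (1 : ℝ) - 1/2 = 1/2 by norm_num]
    have h2' : ((1:ℝ)/2) ^ ((1:ℝ)/2) * ((1:ℝ)/2) ^ ((1:ℝ)/2) = 1/2 := by
      rw [← Real.rpow_add (by norm_num : (0:ℝ) < 1/2)]; norm_num
    linear_combination 24 / (Real.pi * Real.exp 1) * f m * h2' 
  rw [hm_val]
  have key : Real.sin (Real.pi * cdfFn f x) * cdfFn f x ^ cdfFn f x *
      (1 - cdfFn f x) ^ (1 - cdfFn f x) * f x ≤ 1/2 * f m :=
    mul_le_mul hg (fmax x) (hnonneg x) (by norm_num)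
  calc derangetropy f x
      = 24 / (Real.pi * Real.exp 1) * (Real.sin (Real.pi * cdfFn f x) *
        cdfFn f x ^ cdfFn f x * (1 - cdfFn f x) ^ (1 - cdfFn f x) * f x) := by
        unfold derangetropy; ring
    _ ≤ 24 / (Real.pi * Real.exp 1) * (1/2 * f m) :=
        mul_le_mul_of_nonneg_left key hC
end

section
/- For all x ∈ (0,1), the inequality sin(πx) · x^x · (1−x)^{1−x} ≤ 1/2 holds, with equality if and only if x = 1/2. Equivalently, the derangetropy of the uniform distribution on (0,1), ρ(x) = (24/(πe)) sin(πx) x^x (1−x)^{1−x}, attains its global maximum at x = 1/2 with value 12/(πe). -/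
set_option maxHeartbeats 800000

open Real Set

/-- auxiliary function: `log (x^(1+x) * (1-x)^(2-x))`. -/
noncomputable def derangPhi (x : ℝ) : ℝ :=
  (1 + x) * Real.log x + (2 - x) * Real.log (1 - x)

lemma derangPhi_hasDerivAt {x : ℝ} (hx : 0 < x) (hx1 : x < 1) :
    HasDerivAt derangPhi
      (Real.log x - Real.log (1 - x) + (1 + x) / x - (2 - x) / (1 - x)) x := by
  have h1 : (0:ℝ) < 1 - x := by linarith
  have hA : HasDerivAt (fun y : ℝ => (1 + y) * Real.log y)
      (1 * Real.log x + (1 + x) * x⁻¹) x :=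
    ((hasDerivAt_id x).const_add 1).mul (Real.hasDerivAt_log hx.ne')
  have hlog : HasDerivAt (fun y : ℝ => Real.log (1 - y)) ((1 - x)⁻¹ * (-1)) x := by
    exact (Real.hasDerivAt_log h1.ne').comp x ((hasDerivAt_id x).const_sub 1)
  have hB : HasDerivAt (fun y : ℝ => (2 - y) * Real.log (1 - y))
      ((-1) * Real.log (1 - x) + (2 - x) * ((1 - x)⁻¹ * (-1))) x :=
    ((hasDerivAt_id x).const_sub 2).mul hlog
  have := hA.add hB
  refine HasDerivAt.congr_deriv this ?_
  simp only [div_eq_mul_inv]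
  ring

lemma derangPhi_deriv_pos {x : ℝ} (hx : 0 < x) (hx2 : x < 1/2) :
    0 < Real.log x - Real.log (1 - x) + (1 + x) / x - (2 - x) / (1 - x) := by
  have h1 : (0:ℝ) < 1 - x := by linarith
  have hne : (1 - x) / x ≠ 1 := by
    intro h
    have : 1 - x = x := by field_simp at h; linarith
    linarith
  have key : Real.log ((1 - x) / x) < (1 - x) / x - 1 :=
    Real.log_lt_sub_one_of_pos (by positivity) hne
  rw [Real.log_div h1.ne' hx.ne'] at key
  have h2 : (1 + x) / x - (2 - x) / (1 - x)
      = (1 - 2*x) / x + (1 - 2*x) / (1 - x) := by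
    field_simp
    ring
  have h4 : (1 - x) / x - 1 = (1 - 2*x) / x := by
    field_simp
    ring
  have h3 : 0 < (1 - 2*x) / (1 - x) := div_pos (by linarith) h1
  linarith

lemma derangPhi_deriv_neg {x : ℝ} (hx2 : 1/2 < x) (hx1 : x < 1) :
    Real.log x - Real.log (1 - x) + (1 + x) / x - (2 - x) / (1 - x) < 0 := by
  have h1 : (0:ℝ) < 1 - x := by linarith
  have hx : (0:ℝ) < x := by linarith
  have hne : x / (1 - x) ≠ 1 := by
    intro h
    have : x = 1 - x := by field_simp at h; linarith
    linarith
  have key : Real.log (x / (1 - x)) < x / (1 - x) - 1 :=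
    Real.log_lt_sub_one_of_pos (by positivity) hne
  rw [Real.log_div hx.ne' h1.ne'] at key
  have h2 : (1 + x) / x - (2 - x) / (1 - x)
      = (1 - 2*x) / x + (1 - 2*x) / (1 - x) := by
    field_simp
    ring
  have h4 : x / (1 - x) - 1 = -((1 - 2*x) / (1 - x)) := by
    field_simp
    ring
  have h3 : (1 - 2*x) / x < 0 := div_neg_of_neg_of_pos (by linarith) hx
  linarith

lemma derangPhi_lt {x : ℝ} (hx : 0 < x) (hx1 : x < 1) (hne : x ≠ 1/2) :
    derangPhi x < derangPhi (1/2) := by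
  have hcont : ∀ y : ℝ, 0 < y → y < 1 → ContinuousAt derangPhi y := by
    intro y hy hy1
    have h1 : (0:ℝ) < 1 - y := by linarith
    apply ContinuousAt.add
    · exact (continuousAt_const.add continuousAt_id).mul (Real.continuousAt_log hy.ne')
    · exact (continuousAt_const.sub continuousAt_id).mul
        ((Real.continuousAt_log h1.ne').comp (continuousAt_const.sub continuousAt_id))
  rcases lt_or_gt_of_ne hne with h | h
  · -- x < 1/2 : strict mono on Ioc 0 (1/2)... use Icc x (1/2)
    have hmono : StrictMonoOn derangPhi (Icc x (1/2)) := by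
      apply strictMonoOn_of_deriv_pos (convex_Icc _ _)
      · intro y hy
        exact (hcont y (lt_of_lt_of_le hx hy.1) (by linarith [hy.2])).continuousWithinAt
      · intro y hy
        rw [interior_Icc] at hy
        rw [(derangPhi_hasDerivAt (lt_trans hx hy.1) (by linarith [hy.2])).deriv]
        exact derangPhi_deriv_pos (lt_trans hx hy.1) hy.2
    exact hmono ⟨le_refl x, h.le⟩ ⟨h.le, le_refl _⟩ h
  · have hanti : StrictAntiOn derangPhi (Icc (1/2) x) := by
      apply strictAntiOn_of_deriv_neg (convex_Icc _ _)
      · intro y hy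
        exact (hcont y (by linarith [hy.1]) (lt_of_le_of_lt hy.2 hx1)).continuousWithinAt
      · intro y hy
        rw [interior_Icc] at hy
        rw [(derangPhi_hasDerivAt (by linarith [hy.1]) (lt_trans hy.2 hx1)).deriv]
        exact derangPhi_deriv_neg hy.1 (lt_trans hy.2 hx1)
    exact hanti ⟨le_refl _, h.le⟩ ⟨h.le, le_refl x⟩ h

lemma sin_le_parabola_half {x : ℝ} (hx : 0 ≤ x) (hx2 : x ≤ 1/2) :
    Real.sin (Real.pi * x) ≤ 4 * x * (1 - x) := by
  have hpi1 : (157/50:ℝ) < Real.pi := by linarith [Real.pi_gt_d2]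
  have hpi2 : Real.pi < 63/20 := by linarith [Real.pi_lt_d2]
  by_cases hsmall : x ≤ 1/5
  · have hs : Real.sin (Real.pi * x) ≤ Real.pi * x := Real.sin_le (by positivity)
    nlinarith
  · push_neg at hsmall
    obtain ⟨s, hsdef⟩ : ∃ s : ℝ, s = 1/2 - x := ⟨_, rfl⟩
    obtain ⟨v, hv⟩ : ∃ v : ℝ, v = Real.pi * s := ⟨_, rfl⟩
    have hs0 : 0 ≤ s := by rw [hsdef]; linarith
    have hs3 : s ≤ 3/10 := by rw [hsdef]; linarith
    have hv0 : 0 ≤ v := by rw [hv]; positivity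
    have hv1 : |v| ≤ 1 := by
      rw [abs_of_nonneg hv0, hv]
      nlinarith
    have hcos := Real.cos_bound hv1
    rw [abs_of_nonneg hv0] at hcos
    have hcb : Real.cos v ≤ 1 - v^2/2 + v^4 * (5/96) := by
      have := abs_le.1 hcos
      linarith [this.2]
    have hsin : Real.sin (Real.pi * x) = Real.cos v := by
      rw [hv, hsdef, show Real.pi * (1/2 - x) = Real.pi/2 - Real.pi * x by ring,
        Real.cos_pi_div_two_sub]
    have hxid : 4 * x * (1 - x) = 1 - 4 * s^2 := by rw [hsdef]; ring
    rw [hsin, hxid]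
    have hpi2b : Real.pi^2 ≤ (3969/400 : ℝ) := by nlinarith
    have hpi4 : Real.pi^4 ≤ (493/5 : ℝ) := by
      nlinarith [mul_le_mul hpi2b hpi2b (by positivity) (by norm_num : (0:ℝ) ≤ (3969/400 : ℝ))]
    have hs2 : s^2 ≤ 9/100 := by nlinarith
    have hs4 : s^4 ≤ (9/100) * s^2 := by
      nlinarith [mul_nonneg (sub_nonneg.2 hs2) (sq_nonneg s)]
    have hveq : v^2 = Real.pi^2 * s^2 := by rw [hv]; ring
    have hv4 : v^4 = Real.pi^4 * s^4 := by rw [hv]; ring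
    have hpisq : (197/20 : ℝ) ≤ Real.pi^2 := by nlinarith
    have hA : (197/20 : ℝ) * s^2 ≤ Real.pi^2 * s^2 := mul_le_mul_of_nonneg_right hpisq (sq_nonneg s)
    have hB : Real.pi^4 * s^4 ≤ (4437/500 : ℝ) * s^2 := by
      calc Real.pi^4 * s^4 ≤ Real.pi^4 * ((9/100) * s^2) :=
            mul_le_mul_of_nonneg_left hs4 (by positivity)
        _ ≤ (493/5 : ℝ) * ((9/100) * s^2) :=
            mul_le_mul_of_nonneg_right hpi4 (by positivity)
        _ ≤ (4437/500 : ℝ) * s^2 := by nlinarith [sq_nonneg s]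
    linarith [hcb, hA, hB, hveq, hv4, sq_nonneg s]

lemma sin_le_parabola {x : ℝ} (hx : 0 ≤ x) (hx1 : x ≤ 1) :
    Real.sin (Real.pi * x) ≤ 4 * x * (1 - x) := by
  by_cases h : x ≤ 1/2
  · exact sin_le_parabola_half hx h
  · push_neg at h
    have := sin_le_parabola_half (x := 1 - x) (by linarith) (by linarith)
    have hsin : Real.sin (Real.pi * x) = Real.sin (Real.pi * (1 - x)) := by
      rw [show Real.pi * (1 - x) = Real.pi - Real.pi * x by ring, Real.sin_pi_sub]
    rw [hsin]
    calc Real.sin (Real.pi * (1-x)) ≤ 4 * (1-x) * (1 - (1-x)) := this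
      _ = 4 * x * (1 - x) := by ring

lemma rpow_prod_eq_exp {x : ℝ} (hx : 0 < x) (hx1 : x < 1) :
    4 * x * (1 - x) * (x ^ x * (1 - x) ^ (1 - x)) = 4 * Real.exp (derangPhi x) := by
  have h1 : (0:ℝ) < 1 - x := by linarith
  rw [Real.rpow_def_of_pos hx, Real.rpow_def_of_pos h1, derangPhi]
  rw [show (1+x) * Real.log x + (2-x)*Real.log (1-x)
      = (Real.log x + x * Real.log x) + (Real.log (1-x) + (1-x) * Real.log (1-x)) by ring]
  rw [Real.exp_add, Real.exp_add, Real.exp_add, Real.exp_log hx, Real.exp_log h1]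
  ring

lemma derangPhi_half : Real.exp (derangPhi (1/2)) = 1/8 := by
  have : derangPhi (1/2) = Real.log (1/2) + Real.log (1/2) + Real.log (1/2) := by
    rw [derangPhi]; norm_num; ring
  rw [this, Real.exp_add, Real.exp_add, Real.exp_log (by norm_num : (0:ℝ) < 1/2)]
  norm_num

lemma half_pow_prod : ((1:ℝ)/2) ^ ((1:ℝ)/2) * ((1:ℝ)/2) ^ ((1:ℝ)/2) = 1/2 := by
  rw [← Real.rpow_add (by norm_num : (0:ℝ) < 1/2)]
  norm_num

lemma main_lt {x : ℝ} (hx : 0 < x) (hx1 : x < 1) (hne : x ≠ 1/2) :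
    Real.sin (Real.pi * x) * x ^ x * (1 - x) ^ (1 - x) < 1 / 2 := by
  have h1 : (0:ℝ) < 1 - x := by linarith
  have hp : (0:ℝ) < x ^ x * (1 - x) ^ (1 - x) := by positivity
  have hs := sin_le_parabola hx.le hx1.le
  have step1 : Real.sin (Real.pi * x) * x ^ x * (1 - x) ^ (1 - x)
      ≤ 4 * x * (1 - x) * (x ^ x * (1 - x) ^ (1 - x)) := by
    rw [mul_assoc]
    exact mul_le_mul_of_nonneg_right hs hp.le
  have step2 : 4 * x * (1 - x) * (x ^ x * (1 - x) ^ (1 - x)) < 1/2 := by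
    rw [rpow_prod_eq_exp hx hx1]
    have := Real.exp_lt_exp.2 (derangPhi_lt hx hx1 hne)
    rw [derangPhi_half] at this
    linarith
  linarith

lemma main_eq : Real.sin (Real.pi * (1/2:ℝ)) * ((1:ℝ)/2) ^ ((1:ℝ)/2)
    * ((1:ℝ)/2) ^ ((1:ℝ)/2) = 1/2 := by
  rw [show Real.pi * (1/2:ℝ) = Real.pi/2 by ring, Real.sin_pi_div_two, one_mul,
    half_pow_prod]

/-- For all `x ∈ (0,1)`, `sin(πx)·x^x·(1-x)^(1-x) ≤ 1/2`, with equality iff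
`x = 1/2`.  Equivalently, the derangetropy of the uniform distribution on `(0,1)`,
`ρ(x) = (24/(πe))·sin(πx)·x^x·(1-x)^(1-x)`, attains its global maximum at
`x = 1/2` with value `12/(πe)`. -/
theorem uniform_derangetropy_max :
    (∀ x ∈ Set.Ioo (0:ℝ) 1,
        Real.sin (Real.pi * x) * x ^ x * (1 - x) ^ (1 - x) ≤ 1 / 2 ∧
        (Real.sin (Real.pi * x) * x ^ x * (1 - x) ^ (1 - x) = 1 / 2 ↔ x = 1 / 2)) ∧
    (∀ x ∈ Set.Ioo (0:ℝ) 1,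
        24 / (Real.pi * Real.exp 1) * Real.sin (Real.pi * x) * x ^ x * (1 - x) ^ (1 - x)
          ≤ 12 / (Real.pi * Real.exp 1)) ∧
    24 / (Real.pi * Real.exp 1) * Real.sin (Real.pi * (1 / 2 : ℝ)) *
        (1 / 2 : ℝ) ^ (1 / 2 : ℝ) * (1 - 1 / 2 : ℝ) ^ (1 - 1 / 2 : ℝ)
      = 12 / (Real.pi * Real.exp 1) := by
  have key : ∀ x ∈ Set.Ioo (0:ℝ) 1,
      Real.sin (Real.pi * x) * x ^ x * (1 - x) ^ (1 - x) ≤ 1 / 2 ∧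
      (Real.sin (Real.pi * x) * x ^ x * (1 - x) ^ (1 - x) = 1 / 2 ↔ x = 1 / 2) := by
    intro x hx
    by_cases hne : x = 1/2
    · subst hne
      constructor
      · rw [show (1:ℝ) - 1/2 = 1/2 by norm_num, main_eq]
      · rw [show (1:ℝ) - 1/2 = 1/2 by norm_num, main_eq]
    · have := main_lt hx.1 hx.2 hne
      exact ⟨this.le, by constructor <;> intro h <;> [linarith; exact absurd h hne]⟩
  refine ⟨key, ?_, ?_⟩
  · intro x hx
    have h := (key x hx).1
    have hc : (0:ℝ) < 24 / (Real.pi * Real.exp 1) := by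
      positivity
    calc 24 / (Real.pi * Real.exp 1) * Real.sin (Real.pi * x) * x ^ x * (1 - x) ^ (1 - x)
        = 24 / (Real.pi * Real.exp 1) * (Real.sin (Real.pi * x) * x ^ x * (1 - x) ^ (1 - x)) := by
          ring
      _ ≤ 24 / (Real.pi * Real.exp 1) * (1/2) := mul_le_mul_of_nonneg_left h hc.le
      _ = 12 / (Real.pi * Real.exp 1) := by ring
  · rw [show (1:ℝ) - 1/2 = 1/2 by norm_num]
    rw [show 24 / (Real.pi * Real.exp 1) * Real.sin (Real.pi * (1/2:ℝ)) *
        ((1:ℝ)/2) ^ ((1:ℝ)/2) * ((1:ℝ)/2) ^ ((1:ℝ)/2)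
        = 24 / (Real.pi * Real.exp 1) * (Real.sin (Real.pi * (1/2:ℝ)) *
          ((1:ℝ)/2) ^ ((1:ℝ)/2) * ((1:ℝ)/2) ^ ((1:ℝ)/2)) by ring, main_eq]
    ring
end

section
/- Let f be a probability density function symmetric about a point m, i.e., f(m+t) = f(m−t) for all t ∈ ℝ. Then the derangetropy ρ_f is also symmetric about m: ρ_f(m+t) = ρ_f(m−t) for all t ∈ ℝ. -/
open MeasureTheory

lemma setIntegral_comp_add_right_Ioi (f : ℝ → ℝ) (a c : ℝ) :
    ∫ x in Set.Ioi a, f (x + c) = ∫ x in Set.Ioi (a + c), f x := by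
  have A : MeasurableEmbedding (fun x : ℝ => x + c) :=
    (Homeomorph.addRight c).isClosedEmbedding.measurableEmbedding
  have h := A.setIntegral_map (μ := volume) f (Set.Ioi (a + c))
  rw [map_add_right_eq_self volume c] at h
  have hpre : (fun x : ℝ => x + c) ⁻¹' Set.Ioi (a + c) = Set.Ioi a := by
    ext x; simp [Set.mem_Ioi]
  rw [hpre] at h
  exact h.symm

lemma cdfFn_add_symm (f : ℝ → ℝ) (hmeas : Measurable f)
    (hnonneg : ∀ x, 0 ≤ f x) (hint : ∫ x, f x = 1)
    (m : ℝ) (hsym : ∀ t, f (m + t) = f (m - t)) (t : ℝ) :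
    cdfFn f (m + t) = 1 - cdfFn f (m - t) := by
  have hInt : Integrable f := integrable_of_integral_eq_one hint
  have hrefl : ∀ x, f (2 * m + -x) = f x := by
    intro x
    have := hsym (m - x)
    rw [show m + (m - x) = 2 * m + -x by ring, show m - (m - x) = x by ring] at this
    exact this
  have h1 : cdfFn f (m + t) = ∫ x in Set.Ioi (m - t), f x := by
    unfold cdfFn
    calc ∫ x in Set.Iic (m + t), f x
        = ∫ x in Set.Iic (m + t), f (2 * m + -x) := by
          refine setIntegral_congr_fun measurableSet_Iic fun x _ => (hrefl x).symm
      _ = ∫ x in Set.Ioi (-(m + t)), f (2 * m + x) :=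
          integral_comp_neg_Iic (m + t) (fun y => f (2 * m + y))
      _ = ∫ x in Set.Ioi (-(m + t)), f (x + 2 * m) := by simp_rw [add_comm]
      _ = ∫ x in Set.Ioi (-(m + t) + 2 * m), f x :=
          setIntegral_comp_add_right_Ioi f _ _
      _ = ∫ x in Set.Ioi (m - t), f x := by ring_nf
  have h2 : (∫ x in Set.Iic (m - t), f x) + (∫ x in Set.Ioi (m - t), f x) = 1 := by
    rw [intervalIntegral.integral_Iic_add_Ioi hInt.integrableOn hInt.integrableOn, hint]
  have : cdfFn f (m - t) = ∫ x in Set.Iic (m - t), f x := rfl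
  rw [h1, this]; linarith
/-- If the density `f` is symmetric about `m`, then so is its derangetropy:
`ρ_f(m+t) = ρ_f(m-t)` for all `t`. -/
theorem derangetropy_symm (f : ℝ → ℝ) (hmeas : Measurable f)
    (hnonneg : ∀ x, 0 ≤ f x) (hint : ∫ x, f x = 1)
    (m : ℝ) (hsym : ∀ t, f (m + t) = f (m - t)) :
    ∀ t, derangetropy f (m + t) = derangetropy f (m - t) := by
  intro t
  have h := cdfFn_add_symm f hmeas hnonneg hint m hsym t
  unfold derangetropy
  rw [h, hsym t]
  have hs : Real.sin (Real.pi * (1 - cdfFn f (m - t)))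
      = Real.sin (Real.pi * cdfFn f (m - t)) := by
    rw [mul_sub, mul_one, Real.sin_pi_sub]
  rw [hs]
  ring_nf
end

section
/- Define g : ℂ → ℂ by g(u) = exp( u·e^u/(e^u − 1) ) · e^u/(e^u − 1)³ (for e^u ≠ 1). Then for all sufficiently small r > 0, the counterclockwise circle integral of g around 0 of radius r equals −2πi·e/24; equivalently, the residue of g at u = 0 is −e/24. -/
/-- The function `g(u) = exp(u·e^u/(e^u-1)) · e^u/(e^u-1)³`. -/
noncomputable def gFun (u : ℂ) : ℂ :=
  Complex.exp (u * Complex.exp u / (Complex.exp u - 1)) *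
    Complex.exp u / (Complex.exp u - 1) ^ 3

open Complex Metric Filter Set
open scoped Topology

namespace GFunAux

lemma analyticAt_deriv {f : ℂ → ℂ} (hf : AnalyticAt ℂ f 0) : AnalyticAt ℂ (deriv f) 0 := by
  rcases hf.exists_mem_nhds_analyticOnNhd with ⟨s, hs, h⟩
  exact h.deriv 0 (mem_of_mem_nhds hs)

lemma deriv_deriv_eq {f : ℂ → ℂ} {p : FormalMultilinearSeries ℂ ℂ ℂ}
    (hp : HasFPowerSeriesAt f p 0) : deriv (deriv f) 0 = 2 * p.coeff 2 := by
  set d1 := dslope f 0 with hd1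
  have hq : HasFPowerSeriesAt d1 p.fslope 0 := hp.has_fpower_series_dslope_fslope
  have hd1an : AnalyticAt ℂ d1 0 := hq.analyticAt
  have hfv : ∀ v : ℂ, f v = f 0 + v * d1 v := by
    intro v
    have h := sub_smul_dslope f 0 v
    simp only [sub_zero, smul_eq_mul] at h
    rw [hd1]; linear_combination -h
  have hev : deriv f =ᶠ[𝓝 (0:ℂ)] fun u => d1 u + u * deriv d1 u := by
    filter_upwards [hd1an.eventually_analyticAt] with u hu
    have hdu : HasDerivAt d1 (deriv d1 u) u := hu.differentiableAt.hasDerivAt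
    have h2 : HasDerivAt (fun v => f 0 + v * d1 v) (1 * d1 u + u * deriv d1 u) u :=
      ((hasDerivAt_id u).mul hdu).const_add _
    have h3 : HasDerivAt f (1 * d1 u + u * deriv d1 u) u := by
      apply h2.congr_of_eventuallyEq
      filter_upwards with v using (hfv v)
    rw [h3.deriv]; ring
  rw [hev.deriv_eq]
  have hdd : HasDerivAt (fun u : ℂ => d1 u + u * deriv d1 u)
      (deriv d1 0 + (1 * deriv d1 0 + 0 * deriv (deriv d1) 0)) 0 :=
    (hd1an.differentiableAt.hasDerivAt).add
      ((hasDerivAt_id 0).mul ((analyticAt_deriv hd1an).differentiableAt.hasDerivAt))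
  rw [hdd.deriv]
  have : deriv d1 0 = p.fslope.coeff 1 := hq.deriv
  rw [this, FormalMultilinearSeries.coeff_fslope]
  ring

structure E2 (f : ℂ → ℂ) (c0 c1 c2 : ℂ) : Prop where
  an : AnalyticAt ℂ f 0
  v0 : f 0 = c0
  v1 : deriv f 0 = c1
  v2 : deriv (deriv f) 0 = c2

lemma E2.congr {f : ℂ → ℂ} {a0 a1 a2 b0 b1 b2 : ℂ} (hf : E2 f a0 a1 a2)
    (h0 : a0 = b0) (h1 : a1 = b1) (h2 : a2 = b2) : E2 f b0 b1 b2 :=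
  ⟨hf.an, h0 ▸ hf.v0, h1 ▸ hf.v1, h2 ▸ hf.v2⟩

protected lemma E2.id : E2 (fun u : ℂ => u) 0 1 0 := by
  refine ⟨analyticAt_id, rfl, ?_, ?_⟩
  · simp
  · simp

protected lemma E2.const (c : ℂ) : E2 (fun _ : ℂ => c) c 0 0 := by
  refine ⟨analyticAt_const, rfl, ?_, ?_⟩ <;> simp

protected lemma E2.mul {f g : ℂ → ℂ} {a0 a1 a2 b0 b1 b2 : ℂ}
    (hf : E2 f a0 a1 a2) (hg : E2 g b0 b1 b2) :
    E2 (fun u => f u * g u) (a0 * b0) (a1 * b0 + a0 * b1) (a2 * b0 + 2 * a1 * b1 + a0 * b2) := by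
  have Hf := hf.an.differentiableAt
  have Hg := hg.an.differentiableAt
  have Hf' := (analyticAt_deriv hf.an).differentiableAt
  have Hg' := (analyticAt_deriv hg.an).differentiableAt
  have hev : deriv (fun u => f u * g u) =ᶠ[𝓝 (0:ℂ)]
      fun u => deriv f u * g u + f u * deriv g u := by
    filter_upwards [hf.an.eventually_analyticAt, hg.an.eventually_analyticAt] with u hfu hgu
    exact deriv_mul hfu.differentiableAt hgu.differentiableAt
  refine ⟨hf.an.mul hg.an, by simp only [hf.v0, hg.v0], ?_, ?_⟩
  · rw [deriv_fun_mul Hf Hg, hf.v0, hg.v0, hf.v1, hg.v1]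
  · rw [hev.deriv_eq, deriv_fun_add (f := fun u => deriv f u * g u) (g := fun u => f u * deriv g u) (Hf'.mul Hg) (Hf.mul Hg'), deriv_fun_mul Hf' Hg, deriv_fun_mul Hf Hg',
      hf.v0, hf.v1, hf.v2, hg.v0, hg.v1, hg.v2]
    ring

protected lemma E2.cexp {f : ℂ → ℂ} {a0 a1 a2 : ℂ} (hf : E2 f a0 a1 a2) :
    E2 (fun u => Complex.exp (f u)) (Complex.exp a0) (Complex.exp a0 * a1)
      (Complex.exp a0 * (a2 + a1 ^ 2)) := by
  have Hf := hf.an.differentiableAt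
  have Hf' := (analyticAt_deriv hf.an).differentiableAt
  have hfe : AnalyticAt ℂ (fun u => Complex.exp (f u)) 0 := analyticAt_cexp.comp hf.an
  have hev : deriv (fun u => Complex.exp (f u)) =ᶠ[𝓝 (0:ℂ)]
      fun u => Complex.exp (f u) * deriv f u := by
    filter_upwards [hf.an.eventually_analyticAt] with u hu
    exact deriv_cexp hu.differentiableAt
  refine ⟨hfe, by simp [hf.v0], ?_, ?_⟩
  · rw [deriv_cexp Hf, hf.v0, hf.v1]
  · rw [hev.deriv_eq, deriv_fun_mul hfe.differentiableAt Hf', deriv_cexp Hf,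
      hf.v0, hf.v1, hf.v2]
    ring

protected lemma E2.inv {f : ℂ → ℂ} {a0 a1 a2 : ℂ} (hf : E2 f a0 a1 a2) (h0 : a0 ≠ 0) :
    E2 (fun u => (f u)⁻¹) a0⁻¹ (-(a1 / a0 ^ 2)) (-(a2 / a0 ^ 2) + 2 * a1 ^ 2 / a0 ^ 3) := by
  have hf0 : f 0 ≠ 0 := by rw [hf.v0]; exact h0
  have Hf := hf.an.differentiableAt
  have Hf' := (analyticAt_deriv hf.an).differentiableAt
  have hne : ∀ᶠ u in 𝓝 (0:ℂ), f u ≠ 0 := hf.an.continuousAt.eventually_ne hf0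
  have hev : deriv (fun u => (f u)⁻¹) =ᶠ[𝓝 (0:ℂ)]
      fun u => -(deriv f u / f u ^ 2) := by
    filter_upwards [hf.an.eventually_analyticAt, hne] with u hu hu0
    rw [deriv_fun_inv'' hu.differentiableAt hu0]; ring
  refine ⟨hf.an.inv hf0, by simp [hf.v0], ?_, ?_⟩
  · rw [deriv_fun_inv'' Hf hf0, hf.v0, hf.v1]; ring
  · rw [hev.deriv_eq]
    have hdiv : HasDerivAt (fun u => -(deriv f u / f u ^ 2))
        (-((deriv (deriv f) 0 * f 0 ^ 2 - deriv f 0 * (2 * f 0 ^ 1 * deriv f 0)) / (f 0 ^ 2) ^ 2))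
        0 := by
      exact (((analyticAt_deriv hf.an).differentiableAt.hasDerivAt).div
        ((hf.an.differentiableAt.hasDerivAt).pow 2) (pow_ne_zero 2 hf0)).neg
    rw [hdiv.deriv, hf.v0, hf.v1, hf.v2]
    field_simp
    ring

/-! ### The function `d = dslope exp 0` -/

lemma exp_hasFPS : HasFPowerSeriesAt Complex.exp (NormedSpace.expSeries ℂ ℂ) 0 := by
  rw [Complex.exp_eq_exp_ℂ]
  exact NormedSpace.exp_hasFPowerSeriesAt_zero

lemma expSeries_coeff (n : ℕ) : (NormedSpace.expSeries ℂ ℂ).coeff n = ((n.factorial : ℂ))⁻¹ := by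
  have h := NormedSpace.expSeries_apply_eq (𝕂 := ℂ) (1 : ℂ) n
  rw [show (FormalMultilinearSeries.coeff (NormedSpace.expSeries ℂ ℂ) n)
      = (NormedSpace.expSeries ℂ ℂ n fun _ => (1:ℂ)) from rfl, h]
  simp

lemma E2_dslope_exp : E2 (dslope Complex.exp 0) 1 (2:ℂ)⁻¹ (3:ℂ)⁻¹ := by
  have hq : HasFPowerSeriesAt (dslope Complex.exp 0) (NormedSpace.expSeries ℂ ℂ).fslope 0 :=
    exp_hasFPS.has_fpower_series_dslope_fslope
  refine ⟨hq.analyticAt, ?_, ?_, ?_⟩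
  · rw [dslope_same, Complex.deriv_exp, Complex.exp_zero]
  · have h1 : deriv (dslope Complex.exp 0) 0 = (NormedSpace.expSeries ℂ ℂ).fslope.coeff 1 :=
      hq.deriv
    rw [h1, FormalMultilinearSeries.coeff_fslope, expSeries_coeff]
    norm_num [Nat.factorial]
  · rw [deriv_deriv_eq hq, FormalMultilinearSeries.coeff_fslope, expSeries_coeff]
    norm_num [Nat.factorial]

/-! ### The auxiliary holomorphic function `h` with `h u = u ^ 3 * gFun u` -/

/-- `a u = u * exp u / (exp u - 1)`, extended analytically through `0`. -/
noncomputable def aFun : ℂ → ℂ := fun u => Complex.exp u * (dslope Complex.exp 0 u)⁻¹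

/-- `h u = u ^ 3 * gFun u`, extended analytically through `0`. -/
noncomputable def hFun : ℂ → ℂ := fun u =>
  Complex.exp (aFun u) * (aFun u * (aFun u * aFun u)) * Complex.exp ((-2) * u)

lemma E2_exp : E2 (fun u : ℂ => Complex.exp u) 1 1 1 := by
  have := E2.id.cexp
  exact this.congr (by simp) (by simp) (by simp)

lemma E2_aFun : E2 aFun 1 (2:ℂ)⁻¹ (6:ℂ)⁻¹ := by
  have hdi := E2_dslope_exp.inv one_ne_zero
  have := E2_exp.mul hdi
  exact this.congr (by norm_num) (by norm_num) (by norm_num)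

lemma E2_hFun : E2 hFun (Complex.exp 1) 0 (-(Complex.exp 1 / 12)) := by
  have ha := E2_aFun
  have hea := ha.cexp
  have ha3 := ha.mul (ha.mul ha)
  have hm : E2 (fun u : ℂ => Complex.exp ((-2) * u)) 1 (-2) 4 := by
    have hl := (E2.const (-2 : ℂ)).mul E2.id
    have := hl.cexp
    exact this.congr (by norm_num) (by norm_num) (by norm_num)
  have := (hea.mul ha3).mul hm
  refine this.congr (by ring) (by ring) (by ring)

lemma hFun_eq {u : ℂ} (hu : u ≠ 0) (he : Complex.exp u - 1 ≠ 0) :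
    hFun u = u ^ 3 * gFun u := by
  have hd : dslope Complex.exp 0 u = (Complex.exp u - 1) / u := by
    rw [dslope_of_ne _ hu, slope_def_field, Complex.exp_zero, sub_zero]
  have ha : aFun u = u * Complex.exp u / (Complex.exp u - 1) := by
    rw [aFun, hd]
    field_simp
  have hexp2 : Complex.exp ((-2) * u) * (Complex.exp u * Complex.exp u) = 1 := by
    rw [← Complex.exp_add, ← Complex.exp_add,
      show ((-2):ℂ) * u + (u + u) = 0 by ring, Complex.exp_zero]
  have hinv : Complex.exp ((-2) * u) = (Complex.exp u * Complex.exp u)⁻¹ := by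
    field_simp [Complex.exp_ne_zero] at hexp2 ⊢
    linear_combination hexp2
  rw [hFun, ha, gFun, hinv]
  field_simp

lemma exp_sub_one_ne {u : ℂ} (hu0 : u ≠ 0) (hu : ‖u‖ < 2) : Complex.exp u - 1 ≠ 0 := by
  intro hcon
  have hexp1 : Complex.exp u = 1 := by linear_combination hcon
  rcases Complex.exp_eq_one_iff.mp hexp1 with ⟨n, hn⟩
  rcases eq_or_ne n 0 with rfl | hn0
  · simp at hn; exact hu0 hn
  · have hle : 2 * Real.pi ≤ ‖u‖ := by
      rw [hn, norm_mul]
      have h2 : ‖((n:ℤ) : ℂ)‖ = |(n:ℝ)| := by simp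
      have h3 : ‖(2 * (Real.pi:ℂ) * Complex.I)‖ = 2 * Real.pi := by
        simp [norm_mul, Real.pi_nonneg]
      rw [h2, h3]
      have : (1:ℝ) ≤ |(n:ℝ)| := by exact_mod_cast Int.one_le_abs hn0
      nlinarith [Real.pi_pos]
    nlinarith [Real.pi_gt_three]

end GFunAux

open GFunAux in
/-- For all sufficiently small radii `r > 0`, the counterclockwise circle integral
of `g` around `0` equals `-2πi·e/24`, i.e. the residue of `g` at `0` is `-e/24`. -/
theorem gFun_circleIntegral :
    ∃ ε > 0, ∀ r : ℝ, 0 < r → r < ε →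
      (∮ u in C(0, r), gFun u)
        = -(2 * Real.pi * Complex.I * (Real.exp 1 / 24)) := by
  refine ⟨1, one_pos, fun r hr0 hr1 => ?_⟩
  have hball : ∀ u : ℂ, u ∈ closedBall (0:ℂ) r →
      DifferentiableAt ℂ (dslope Complex.exp 0) u ∧ dslope Complex.exp 0 u ≠ 0 := by
    intro u hu
    rw [mem_closedBall, dist_zero_right] at hu
    rcases eq_or_ne u 0 with rfl | hu0
    · refine ⟨E2_dslope_exp.an.differentiableAt, ?_⟩
      rw [E2_dslope_exp.v0]; exact one_ne_zero
    · refine ⟨(differentiableAt_dslope_of_ne hu0).mpr (Complex.differentiable_exp u), ?_⟩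
      rw [dslope_of_ne _ hu0, slope_def_field, Complex.exp_zero, sub_zero]
      exact div_ne_zero (exp_sub_one_ne hu0 (by linarith)) hu0
  have hdiff : DifferentiableOn ℂ hFun (closedBall (0:ℂ) r) := by
    intro u hu
    obtain ⟨hdu, hd0⟩ := hball u hu
    have hda : DifferentiableAt ℂ aFun u :=
      (Complex.differentiable_exp u).mul (hdu.inv hd0)
    exact (((hda.cexp.mul (hda.mul (hda.mul hda))).mul
      (((differentiableAt_const _).mul differentiableAt_id).cexp))).differentiableWithinAt
  lift r to NNReal using hr0.le with R hR
  have hps : HasFPowerSeriesOnBall hFun (cauchyPowerSeries hFun 0 R) 0 R :=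
    hdiff.hasFPowerSeriesOnBall (by exact_mod_cast hr0)
  have hcoeff : (cauchyPowerSeries hFun 0 R).coeff 2 = -(Complex.exp 1 / 24) := by
    have h2 := deriv_deriv_eq hps.hasFPowerSeriesAt
    rw [E2_hFun.v2] at h2
    linear_combination -h2 / 2
  have hc2 : (cauchyPowerSeries hFun 0 (R:ℝ)).coeff 2
      = (2 * ↑Real.pi * Complex.I)⁻¹ •
        ∮ z in C(0, (R:ℝ)), ((1:ℂ) / (z - 0)) ^ 2 • (z - 0)⁻¹ • hFun z :=
    cauchyPowerSeries_apply hFun 0 R 2 1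
  have hint : (∮ z in C(0, (R:ℝ)), ((1:ℂ) / (z - 0)) ^ 2 • (z - 0)⁻¹ • hFun z)
      = ∮ u in C(0, (R:ℝ)), gFun u := by
    apply circleIntegral.integral_congr hr0.le
    intro z hz
    rw [mem_sphere_iff_norm, sub_zero] at hz
    have hz0 : z ≠ 0 := by
      intro h; rw [h, norm_zero] at hz; exact absurd hz.symm (ne_of_gt hr0)
    have he : Complex.exp z - 1 ≠ 0 := by
      apply exp_sub_one_ne hz0
      rw [hz]; linarith
    simp only [sub_zero, smul_eq_mul]
    rw [hFun_eq hz0 he]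
    field_simp
  rw [hint] at hc2
  rw [hcoeff] at hc2
  have hne : (2 * (Real.pi:ℂ) * Complex.I) ≠ 0 := by
    simp [Real.pi_ne_zero, Complex.I_ne_zero]
  have : (∮ u in C(0, (R:ℝ)), gFun u) = (2 * ↑Real.pi * Complex.I) * (-(Complex.exp 1 / 24)) := by
    rw [smul_eq_mul] at hc2
    field_simp at hc2
    linear_combination -hc2 / 24
  rw [this]
  push_cast [Complex.ofReal_exp]
  ring
end
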